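/- If R is a reflexive binary relation on U, then for every X ⊆ U the chain apr_lower_{s∨p}(X) ⊆ apr_lower_p(X) ⊆ apr_lower_{s∧p}(X) ⊆ X ⊆ apr_upper_{s∧p}(X) ⊆ apr_upper_p(X) ⊆ apr_upper_{s∨p}(X) holds. -/
import Mathlib


variable {U : Type*}

def Rs (R : U → U → Prop) (x : U) : Set U := {y | R x y}
def Rp (R : U → U → Prop) (x : U) : Set U := {y | R y x}
def Rsp (R : U → U → Prop) (x : U) : Set U := Rs R x ∩ Rp R x
def Rvp (R : U → U → Prop) (x : U) : Set U := Rs R x ∪ Rp R x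

def aprLower (N : U → Set U) (X : Set U) : Set U := {x | N x ⊆ X}
def aprUpper (N : U → Set U) (X : Set U) : Set U := {x | (N x ∩ X).Nonempty}

theorem stmt19 (R : U → U → Prop) (hrefl : ∀ x, R x x) (X : Set U) : aprLower (Rvp R) X ⊆ aprLower (Rp R) X ∧ aprLower (Rp R) X ⊆ aprLower (Rsp R) X ∧ aprLower (Rsp R) X ⊆ X ∧ X ⊆ aprUpper (Rsp R) X ∧ aprUpper (Rsp R) X ⊆ aprUpper (Rp R) X ∧ aprUpper (Rp R) X ⊆ aprUpper (Rvp R) X := by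
  refine ⟨?_, ?_, ?_, ?_, ?_, ?_⟩
  · intro x hx y hy; exact hx (Or.inr hy)
  · intro x hx y hy; exact hx hy.2
  · intro x hx; exact hx ⟨hrefl x, hrefl x⟩
  · intro x hx; exact ⟨x, ⟨hrefl x, hrefl x⟩, hx⟩
  · rintro x ⟨y, hy, hyX⟩; exact ⟨y, hy.2, hyX⟩
  · rintro x ⟨y, hy, hyX⟩; exact ⟨y, Or.inr hy, hyX⟩
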